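/- Let $A : [0,\infty) \to [0,\infty)$ be absolutely continuous with $A \in L^1(0,\infty)$, and suppose $A'(t) \leq C(A(t)^2 + A(t))$ for almost every $t \geq 0$, where $C > 0$. Then $A$ is uniformly bounded on $[0,\infty)$ and $\lim_{t\to+\infty} A(t) = 0$. -/

import Mathlib

open MeasureTheory

/-- a nonnegative, integrable (absolutely continuous, here: differentiable)
function on `[0,∞)` whose derivative satisfies `A' ≤ C(A² + A)` a.e. is uniformly
bounded and tends to `0` at infinity. -/
theorem bounded_and_decay_of_integrable_diff_ineq (C : ℝ) (hC : 0 < C) (A : ℝ → ℝ)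
    (hAnn : ∀ t, 0 ≤ t → 0 ≤ A t)
    (hAdiff : ∀ t, 0 ≤ t → DifferentiableAt ℝ A t)
    (hAint : IntegrableOn A (Set.Ici 0))
    (hineq : ∀ᵐ t ∂(volume.restrict (Set.Ici (0:ℝ))),
      deriv A t ≤ C * ((A t)^2 + A t)) :
    (∃ M, ∀ t, 0 ≤ t → A t ≤ M) ∧
      Filter.Tendsto A Filter.atTop (nhds 0) := by
  set u : ℝ → ℝ := fun t => A t / (1 + A t) with hu_def
  have hpos : ∀ t, 0 ≤ t → (0:ℝ) < 1 + A t := fun t ht => by linarith [hAnn t ht]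
  have hu_nonneg : ∀ t, 0 ≤ t → 0 ≤ u t := fun t ht => div_nonneg (hAnn t ht) (hpos t ht).le
  have hu_le_A : ∀ t, 0 ≤ t → u t ≤ A t := by
    intro t ht
    rw [hu_def]
    rw [div_le_iff₀ (hpos t ht)]
    nlinarith [hAnn t ht]
  have hA_eq : ∀ t, 0 ≤ t → A t = u t / (1 - u t) := by
    intro t ht
    have h1 : (1:ℝ) + A t ≠ 0 := (hpos t ht).ne'
    rw [hu_def]
    field_simp
    ring
  have hu_deriv : ∀ t, 0 ≤ t → HasDerivAt u (deriv A t / (1 + A t)^2) t := by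
    intro t ht
    have hA := (hAdiff t ht).hasDerivAt
    have h2 : HasDerivAt (fun s => 1 + A s) (deriv A t) t := hA.const_add 1
    have h3 := hA.div h2 (hpos t ht).ne'
    rw [show deriv A t * (1 + A t) - A t * deriv A t = deriv A t by ring] at h3
    exact h3
  have hae : ∀ᵐ t ∂(volume.restrict (Set.Ici (0:ℝ))), deriv A t / (1 + A t)^2 ≤ C := by
    filter_upwards [hineq, ae_restrict_mem measurableSet_Ici] with t h1 h2
    have h0 : 0 ≤ A t := hAnn t h2
    have hp : (0:ℝ) < 1 + A t := hpos t h2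
    rw [div_le_iff₀ (by positivity)]
    nlinarith
  -- the key growth bound
  have key : ∀ a b : ℝ, 0 ≤ a → a ≤ b → u b - u a ≤ C * (b - a) := by
    intro a b ha hab
    set φ : ℝ → ℝ := fun t => max (deriv A t / (1 + A t)^2) C with hφ
    have hsub : Set.Icc a b ⊆ Set.Ici (0:ℝ) := fun x hx => le_trans ha hx.1
    have haeIcc : ∀ᵐ t ∂(volume.restrict (Set.Icc a b)), φ t = C := by
      filter_upwards [ae_restrict_of_ae_restrict_of_subset hsub hae] with t ht
      exact max_eq_right ht
    have hφint : IntegrableOn φ (Set.Icc a b) := by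
      refine (integrableOn_const (C := C) measure_Icc_lt_top.ne).congr ?_
      filter_upwards [haeIcc] with t ht
      exact ht.symm
    have hcont : ContinuousOn u (Set.Icc a b) := fun x hx =>
      ((hu_deriv x (hsub hx)).continuousAt).continuousWithinAt
    have hderiv : ∀ x ∈ Set.Ioo a b, HasDerivWithinAt u (deriv A x / (1 + A x)^2) (Set.Ioi x) x :=
      fun x hx => (hu_deriv x (le_trans ha hx.1.le)).hasDerivWithinAt
    have hle : ∀ x ∈ Set.Ioo a b, deriv A x / (1 + A x)^2 ≤ φ x := fun x _ => le_max_left _ _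
    have H := intervalIntegral.sub_le_integral_of_hasDeriv_right_of_le hab hcont hderiv hφint hle
    have heq : (∫ y in a..b, φ y) = ∫ y in a..b, C := by
      apply intervalIntegral.integral_congr_ae
      have h4 := (ae_restrict_iff' measurableSet_Icc).1 haeIcc
      filter_upwards [h4] with x hx hmem
      have : x ∈ Set.Icc a b := by
        rw [Set.uIoc_of_le hab] at hmem
        exact ⟨hmem.1.le, hmem.2⟩
      rw [hx this]
    rw [heq, intervalIntegral.integral_const, smul_eq_mul, mul_comm] at H
    exact H
  -- measurability and integrability of u
  have hAc : ContinuousOn A (Set.Ici (0:ℝ)) := fun x hx =>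
    (hAdiff x hx).continuousAt.continuousWithinAt
  have hu_cont : ContinuousOn u (Set.Ici (0:ℝ)) :=
    ContinuousOn.div hAc (continuousOn_const.add hAc) (fun x hx => (hpos x hx).ne')
  have hu_int : IntegrableOn u (Set.Ici (0:ℝ)) := by
    refine Integrable.mono hAint (hu_cont.aestronglyMeasurable measurableSet_Ici) ?_
    filter_upwards [ae_restrict_mem measurableSet_Ici] with t ht
    rw [Real.norm_eq_abs, Real.norm_eq_abs, abs_of_nonneg (hu_nonneg t ht),
      abs_of_nonneg (hAnn t ht)]
    exact hu_le_A t ht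
  have hF : Filter.Tendsto (fun b => ∫ x in (0:ℝ)..b, u x) Filter.atTop
      (nhds (∫ x in Set.Ioi (0:ℝ), u x)) :=
    MeasureTheory.intervalIntegral_tendsto_integral_Ioi 0
      (hu_int.mono_set Set.Ioi_subset_Ici_self) Filter.tendsto_id
  -- u tends to 0
  have hsmall : ∀ ε : ℝ, 0 < ε → ∀ᶠ t in Filter.atTop, u t < ε := by
    intro ε hε
    set δ := ε / (2 * C) with hδ
    have hδpos : 0 < δ := by positivity
    have hCδ : C * δ = ε / 2 := by
      rw [hδ]; field_simp
    by_contra hcon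
    rw [Filter.not_eventually] at hcon
    have hG : Filter.Tendsto
        (fun t => (∫ x in (0:ℝ)..t, u x) - ∫ x in (0:ℝ)..(t - δ), u x)
        Filter.atTop (nhds 0) := by
      have h2 : Filter.Tendsto (fun t : ℝ => ∫ x in (0:ℝ)..(t - δ), u x) Filter.atTop
          (nhds (∫ x in Set.Ioi (0:ℝ), u x)) :=
        hF.comp (Filter.tendsto_atTop_add_const_right _ (-δ) Filter.tendsto_id)
      simpa [sub_eq_add_neg] using hF.sub h2
    have hev : ∀ᶠ t in Filter.atTop,
        ((∫ x in (0:ℝ)..t, u x) - ∫ x in (0:ℝ)..(t - δ), u x) < ε / 2 * δ ∧ δ ≤ t := by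
      filter_upwards [hG.eventually_lt_const (show (0:ℝ) < ε / 2 * δ by positivity),
        Filter.eventually_ge_atTop δ] with t h1 h2
      exact ⟨h1, h2⟩
    obtain ⟨t, hut, h1, h2⟩ := (hcon.and_eventually hev).exists
    rw [not_lt] at hut
    have ht0 : 0 ≤ t - δ := by linarith
    have hlow : ∀ s ∈ Set.Icc (t - δ) t, ε / 2 ≤ u s := by
      intro s hs
      have h3 := key s t (by linarith [hs.1]) hs.2
      have h4 : C * (t - s) ≤ C * δ := by
        apply mul_le_mul_of_nonneg_left _ hC.le
        linarith [hs.1]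
      linarith [hCδ ▸ h4]
    have hint1 : IntervalIntegrable u volume (t - δ) t := by
      rw [intervalIntegrable_iff_integrableOn_Icc_of_le (by linarith)]
      exact hu_int.mono_set (fun x hx => le_trans ht0 hx.1)
    have h5 : ε / 2 * δ ≤ ∫ x in (t - δ)..t, u x := by
      have h6 := intervalIntegral.integral_mono_on (by linarith : t - δ ≤ t)
        (intervalIntegrable_const (c := ε / 2)) hint1 hlow
      rw [intervalIntegral.integral_const, smul_eq_mul] at h6
      calc ε / 2 * δ = (t - (t - δ)) * (ε / 2) := by ring
        _ ≤ _ := h6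
    have hint2 : IntervalIntegrable u volume 0 t := by
      rw [intervalIntegrable_iff_integrableOn_Icc_of_le (by linarith)]
      exact hu_int.mono_set (fun x hx => hx.1)
    have hint3 : IntervalIntegrable u volume 0 (t - δ) := by
      rw [intervalIntegrable_iff_integrableOn_Icc_of_le ht0]
      exact hu_int.mono_set (fun x hx => hx.1)
    have h7 : (∫ x in (0:ℝ)..t, u x) - ∫ x in (0:ℝ)..(t - δ), u x
        = ∫ x in (t - δ)..t, u x :=
      intervalIntegral.integral_interval_sub_left hint2 hint3
    rw [h7] at h1
    linarith
  have hu_tendsto : Filter.Tendsto u Filter.atTop (nhds 0) := by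
    refine tendsto_order.2 ⟨?_, ?_⟩
    · intro a ha
      filter_upwards [Filter.eventually_ge_atTop (0:ℝ)] with t ht
      exact lt_of_lt_of_le ha (hu_nonneg t ht)
    · intro a ha
      exact hsmall a ha
  have hA_tendsto : Filter.Tendsto A Filter.atTop (nhds 0) := by
    have h1 : Filter.Tendsto (fun t => u t / (1 - u t)) Filter.atTop (nhds 0) := by
      have h2 := hu_tendsto.div ((tendsto_const_nhds (x := (1:ℝ))).sub hu_tendsto)
        (by norm_num)
      convert h2 using 2 <;> norm_num
    refine h1.congr' ?_
    filter_upwards [Filter.eventually_ge_atTop (0:ℝ)] with t ht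
    exact (hA_eq t ht).symm
  refine ⟨?_, hA_tendsto⟩
  obtain ⟨T, hT⟩ := Filter.eventually_atTop.1
    (hA_tendsto.eventually_lt_const (show (0:ℝ) < 1 by norm_num))
  set T' := max T 0 with hT'
  obtain ⟨M, hM⟩ := (isCompact_Icc (a := (0:ℝ)) (b := T')).exists_bound_of_continuousOn
    (hAc.mono (fun x hx => hx.1))
  refine ⟨max M 1, fun t ht => ?_⟩
  rcases le_or_gt t T' with h | h
  · exact le_trans (le_trans (le_abs_self _) (hM t ⟨ht, h⟩)) (le_max_left _ _)
  · exact le_trans (hT t (le_trans (le_max_left T 0) h.le)).le (le_max_right _ _)
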